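/- arXiv:2012.14300 — 2 statements merged into one kernel-verified Lean document; each statement's English description precedes it below -/
import Mathlib

section
/- Let G be an infinite, connected, locally finite graph with exactly two ends whose automorphism group is almost transitive (finitely many vertex orbits), and fix the two ends. For every vertex v lying in some minimum separator separating the two ends, there is a unique 'leftmost' minimum separator S_v containing v: for every minimum separator S separating the two ends with v ∈ S, the left infinite side (S_v)^L of S_v is contained in the left infinite side S^L of S. -/
open SimpleGraph

/-- The automorphism group of `G`, as a subgroup of the symmetric group on the vertices. -/
def autGroup {V : Type*} (G : SimpleGraph V) : Subgroup (Equiv.Perm V) where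
  carrier := {σ | ∀ a b, G.Adj (σ a) (σ b) ↔ G.Adj a b}
  one_mem' := fun _ _ => Iff.rfl
  mul_mem' := by
    intro σ τ hσ hτ a b
    rw [Equiv.Perm.mul_apply, Equiv.Perm.mul_apply]
    exact (hσ _ _).trans (hτ _ _)
  inv_mem' := by
    intro σ hσ a b
    rw [← hσ (σ⁻¹ a) (σ⁻¹ b), Equiv.Perm.inv_def, Equiv.apply_symm_apply, Equiv.apply_symm_apply]


open Opposite

open SimpleGraph CategoryTheory


set_option linter.unusedSectionVars false
set_option linter.unusedVariables false

namespace Stmt15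

variable {V : Type*} [DecidableEq V] {G : SimpleGraph V}

lemma not_mem_finset_of_mem_supp {S : Finset V} {C : G.ComponentCompl (S : Set V)} {a : V}
    (h : a ∈ C.supp) : a ∉ S := by
  obtain ⟨hn, -⟩ := h
  simpa using hn

lemma supp_disjoint {S : Finset V} {C D : G.ComponentCompl (S : Set V)} (h : C ≠ D) {a : V}
    (ha : a ∈ C.supp) : a ∉ D.supp := by
  rintro ⟨h2, e2⟩
  obtain ⟨h1, e1⟩ := ha
  exact h (by rw [← e1, ← e2])

lemma mem_supp_of_adj' {S : Finset V} {C : G.ComponentCompl (S : Set V)} {a b : V}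
    (ha : a ∈ C.supp) (hab : G.Adj a b) (hb : b ∉ S) : b ∈ C.supp :=
  ComponentCompl.mem_of_adj a b ha (by simpa using hb) hab

lemma mem_supp_of_walk {S : Finset V} {C : G.ComponentCompl (S : Set V)} {a b : V}
    (ha : a ∈ C.supp) (p : G.Walk a b) (hp : ∀ x ∈ p.support, x ∉ S) : b ∈ C.supp := by
  induction p with
  | nil => exact ha
  | @cons u v w h q ih =>
      exact ih (mem_supp_of_adj' ha h (hp v (by simp))) (fun x hx => hp x (by simp [hx]))

/-- The inclusion homomorphism from an induced subgraph. -/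
def inclHom (t : Set V) : G.induce t →g G :=
  ⟨Subtype.val, fun {a b} h => h⟩

lemma exists_walk_of_mem_supp {S : Finset V} {C : G.ComponentCompl (S : Set V)} {a b : V}
    (ha : a ∈ C.supp) (hb : b ∈ C.supp) : ∃ p : G.Walk a b, ∀ x ∈ p.support, x ∉ S := by
  obtain ⟨h1, e1⟩ := ha
  obtain ⟨h2, e2⟩ := hb
  have hmk : G.componentComplMk h1 = G.componentComplMk h2 := by rw [e1, e2]
  have hr : (G.induce ((S : Set V))ᶜ).Reachable ⟨a, h1⟩ ⟨b, h2⟩ :=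
    (SimpleGraph.ConnectedComponent.eq).mp hmk
  obtain ⟨w⟩ := hr
  refine ⟨w.map (inclHom _), ?_⟩
  intro x hx
  replace hx : x ∈ (w.map (inclHom (G := G) ((S : Set V))ᶜ)).support := hx
  rw [Walk.support_map] at hx
  obtain ⟨y, -, rfl⟩ := List.mem_map.mp hx
  exact fun hy => y.prop hy

lemma supp_nonempty {S : Finset V} (C : G.ComponentCompl (S : Set V)) : C.supp.Nonempty :=
  C.nonempty

lemma exists_adj_boundary {S : Finset V} {C : G.ComponentCompl (S : Set V)} {a b : V}
    (ha : a ∈ C.supp) (hb : b ∉ C.supp) (p : G.Walk a b) :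
    ∃ x y, G.Adj x y ∧ x ∈ C.supp ∧ y ∈ p.support ∧ y ∈ S := by
  obtain ⟨d, hd, h1, h2⟩ := p.exists_boundary_dart C.supp ha hb
  refine ⟨d.fst, d.snd, d.adj, h1, p.dart_snd_mem_support_of_mem_darts hd, ?_⟩
  by_contra hyS
  exact h2 (mem_supp_of_adj' h1 d.adj hyS)

variable {e e' : ∀ K : (Finset V)ᵒᵖ, G.componentComplFunctor.obj K}

lemma supp_mono (he : e ∈ G.end) {S S' : Finset V} (h : S ⊆ S') :
    (e (op S')).supp ⊆ (e (op S)).supp := by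
  have h1 := he (CategoryTheory.opHomOfLE (show S ≤ S' from h))
  rw [← h1]
  simp only [componentComplFunctor_map]
  exact ComponentCompl.subset_hom _ (Finset.coe_subset.mpr h)

lemma tight {k : ℕ} (he : e ∈ G.end) (he' : e' ∈ G.end)
    (hmin : ∀ S : Finset V, e (op S) ≠ e' (op S) → k ≤ S.card)
    {S : Finset V} (hcard : S.card = k) (hsep : e (op S) ≠ e' (op S)) {u : V} (hu : u ∈ S) :
    ∃ w, G.Adj u w ∧ w ∈ (e (op S)).supp := by
  have hk : 1 ≤ k := hcard ▸ Finset.card_pos.mpr ⟨u, hu⟩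
  have hce : (S.erase u).card < k := by
    rw [Finset.card_erase_of_mem hu, hcard]; omega
  have hsep' : e (op (S.erase u)) = e' (op (S.erase u)) := by
    by_contra hne
    exact absurd (hmin _ hne) (by omega)
  obtain ⟨a, haS⟩ := supp_nonempty (e (op S))
  obtain ⟨b, hbS⟩ := supp_nonempty (e' (op S))
  have ha' : a ∈ (e (op (S.erase u))).supp := supp_mono he (Finset.erase_subset _ _) haS
  have hb' : b ∈ (e (op (S.erase u))).supp := by
    rw [hsep']; exact supp_mono he' (Finset.erase_subset _ _) hbS
  obtain ⟨p, hp⟩ := exists_walk_of_mem_supp ha' hb'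
  have hbnot : b ∉ (e (op S)).supp := supp_disjoint (Ne.symm hsep) hbS
  obtain ⟨x, y, hadj, hx, hyp, hyS⟩ := exists_adj_boundary haS hbnot p
  have hyu : y = u := by
    have hy := hp y hyp
    by_contra hne
    exact hy (Finset.mem_erase.mpr ⟨hne, hyS⟩)
  subst hyu
  exact ⟨x, hadj.symm, hx⟩


open Classical in
/-- The uncrossing of two separators relative to given "left" sides. -/
noncomputable def interT (A B : Finset V) (L L' : Set V) : Finset V :=
  (A ∩ B) ∪ A.filter (· ∈ L') ∪ B.filter (· ∈ L)

lemma mem_interT {A B : Finset V} {L L' : Set V} {x : V} :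
    x ∈ interT A B L L' ↔ (x ∈ A ∧ x ∈ B) ∨ (x ∈ A ∧ x ∈ L') ∨ (x ∈ B ∧ x ∈ L) := by
  simp [interT, Finset.mem_union, Finset.mem_inter, Finset.mem_filter, or_assoc]

lemma interT_subset {A B : Finset V} {L L' : Set V} : interT A B L L' ⊆ A ∪ B := by
  intro x hx
  rcases mem_interT.mp hx with h | h | h <;> simp [h.1]

lemma sep_uncross (he : e ∈ G.end) (he' : e' ∈ G.end) {S S' : Finset V}
    (hS : e (op S) ≠ e' (op S)) (hS' : e (op S') ≠ e' (op S')) :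
    e (op (interT S S' (e (op S)).supp (e (op S')).supp)) ≠
        e' (op (interT S S' (e (op S)).supp (e (op S')).supp)) ∧
      (e (op (interT S S' (e (op S)).supp (e (op S')).supp))).supp ⊆
        (e (op S)).supp ∩ (e (op S')).supp := by
  set L : Set V := (e (op S)).supp with hL
  set L' : Set V := (e (op S')).supp with hL'
  set T : Finset V := interT S S' L L' with hT
  have hTsub : T ⊆ S ∪ S' := interT_subset
  -- the reference vertices
  obtain ⟨a, haU⟩ := supp_nonempty (e (op (S ∪ S')))
  obtain ⟨b, hbU⟩ := supp_nonempty (e' (op (S ∪ S')))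
  have haL : a ∈ L := supp_mono he Finset.subset_union_left haU
  have haL' : a ∈ L' := supp_mono he Finset.subset_union_right haU
  have hbR : b ∈ (e' (op S)).supp := supp_mono he' Finset.subset_union_left hbU
  have haT : a ∈ (e (op T)).supp := supp_mono he hTsub haU
  have hbT : b ∈ (e' (op T)).supp := supp_mono he' hTsub hbU
  -- confinement of walks avoiding T starting in L ∩ L'
  have conf : ∀ {c d : V} (p : G.Walk c d), (∀ x ∈ p.support, x ∉ T) →
      c ∈ L ∩ L' → d ∈ L ∩ L' := by
    intro c d p
    induction p with
    | nil => exact fun _ h => h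
    | @cons c w d hadj q ih =>
        intro hp hc
        obtain ⟨hcL, hcL'⟩ := hc
        have hwT : w ∉ T := hp w (by simp)
        have hwL : w ∈ L := by
          by_contra hnot
          have hwS : w ∈ S := by
            by_contra hnS
            exact hnot (mem_supp_of_adj' hcL hadj hnS)
          have hw1 : ¬(w ∈ S ∧ w ∈ L') := fun hh => hwT (mem_interT.mpr (Or.inr (Or.inl hh)))
          have hw2 : ¬(w ∈ S ∧ w ∈ S') := fun hh => hwT (mem_interT.mpr (Or.inl hh))
          have hwnS' : w ∉ S' := fun hh => hw2 ⟨hwS, hh⟩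
          exact hw1 ⟨hwS, mem_supp_of_adj' hcL' hadj hwnS'⟩
        have hwL' : w ∈ L' := by
          by_contra hnot
          have hwS' : w ∈ S' := by
            by_contra hnS'
            exact hnot (mem_supp_of_adj' hcL' hadj hnS')
          have hw1 : ¬(w ∈ S' ∧ w ∈ L) := fun hh => hwT (mem_interT.mpr (Or.inr (Or.inr hh)))
          exact hw1 ⟨hwS', hwL⟩
        exact ih (fun x hx => hp x (by simp [hx])) ⟨hwL, hwL'⟩
  constructor
  · intro heq
    have hbT' : b ∈ (e (op T)).supp := by rw [heq]; exact hbT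
    obtain ⟨p, hp⟩ := exists_walk_of_mem_supp haT hbT'
    have hb' : b ∈ L ∩ L' := conf p hp ⟨haL, haL'⟩
    exact supp_disjoint (Ne.symm hS) hbR hb'.1
  · intro u hu
    obtain ⟨p, hp⟩ := exists_walk_of_mem_supp haT hu
    exact conf p hp ⟨haL, haL'⟩

lemma uncross (he : e ∈ G.end) (he' : e' ∈ G.end) {k : ℕ}
    (hmin : ∀ S : Finset V, e (op S) ≠ e' (op S) → k ≤ S.card)
    {S S' : Finset V} (h1 : S.card = k) (h2 : e (op S) ≠ e' (op S))
    (h1' : S'.card = k) (h2' : e (op S') ≠ e' (op S')) {v : V} (hv : v ∈ S) (hv' : v ∈ S') :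
    ∃ T : Finset V, T.card = k ∧ e (op T) ≠ e' (op T) ∧ v ∈ T ∧
      (e (op T)).supp ⊆ (e (op S)).supp ∩ (e (op S')).supp := by
  set L : Set V := (e (op S)).supp
  set L' : Set V := (e (op S')).supp
  set R : Set V := (e' (op S)).supp
  set R' : Set V := (e' (op S')).supp
  set T : Finset V := interT S S' L L'
  set T' : Finset V := interT S S' R R'
  obtain ⟨hTsep, hTsub⟩ := sep_uncross he he' h2 h2'
  obtain ⟨hT'sep, -⟩ := sep_uncross he' he (Ne.symm h2) (Ne.symm h2')
  have hkT : k ≤ T.card := hmin _ hTsep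
  have hkT' : k ≤ T'.card := hmin _ (Ne.symm hT'sep)
  -- T ∩ T' = S ∩ S'
  have hinter : T ∩ T' = S ∩ S' := by
    ext x
    simp only [Finset.mem_inter]
    constructor
    · rintro ⟨hxT, hxT'⟩
      rcases mem_interT.mp hxT with h | h | h
      · exact h
      · rcases mem_interT.mp hxT' with g | g | g
        · exact g
        · exact absurd g.2 (supp_disjoint h2' h.2)
        · exact ⟨h.1, g.1⟩
      · rcases mem_interT.mp hxT' with g | g | g
        · exact g
        · exact ⟨g.1, h.1⟩
        · exact absurd g.2 (supp_disjoint h2 h.2)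
    · intro hx
      exact ⟨mem_interT.mpr (Or.inl hx), mem_interT.mpr (Or.inl hx)⟩
  have hunion : (T ∪ T').card ≤ (S ∪ S').card :=
    Finset.card_le_card (Finset.union_subset_iff.mpr ⟨interT_subset, interT_subset⟩)
  have hcc := Finset.card_union_add_card_inter T T'
  have hcc' := Finset.card_union_add_card_inter S S'
  have hTcard : T.card = k := by
    have : T.card + T'.card = (T ∪ T').card + (T ∩ T').card := hcc.symm
    rw [hinter] at this
    omega
  exact ⟨T, hTcard, hTsep, mem_interT.mpr (Or.inl ⟨hv, hv'⟩), hTsub⟩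


lemma finite_seps (hlf : ∀ w : V, (G.neighborSet w).Finite)
    (he : e ∈ G.end) (he' : e' ∈ G.end) {k : ℕ}
    (hmin : ∀ S : Finset V, e (op S) ≠ e' (op S) → k ≤ S.card) (v : V) :
    {S : Finset V | S.card = k ∧ e (op S) ≠ e' (op S) ∧ v ∈ S}.Finite := by
  by_contra hinf
  rw [← Set.not_infinite, not_not] at hinf
  let emb := hinf.natEmbedding
  let Sn : ℕ → Finset V := fun n => (emb n : Finset V)
  have hSn : ∀ n, (Sn n).card = k ∧ e (op (Sn n)) ≠ e' (op (Sn n)) ∧ v ∈ Sn n :=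
    fun n => (emb n).prop
  have hSninj : Function.Injective Sn := fun m n h => by
    simpa using emb.injective (Subtype.ext h)
  let U : Ultrafilter ℕ := Filter.hyperfilter ℕ
  have hUinf : ∀ s ∈ U, s.Infinite := by
    intro s hs
    by_contra hfin
    rw [Set.not_infinite] at hfin
    exact Set.Finite.notMem_hyperfilter hfin hs
  set A : Set V := {u | {n | u ∈ Sn n} ∈ U} with hA
  have hsubA : ∀ t : Finset V, ↑t ⊆ A → {n | ∀ u ∈ t, u ∈ Sn n} ∈ U := by
    intro t ht
    have heq : {n | ∀ u ∈ t, u ∈ Sn n} = ⋂ u ∈ t, {n | u ∈ Sn n} := by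
      ext n; simp
    rw [heq]
    exact (Filter.biInter_mem t.finite_toSet).mpr fun u hu => ht hu
  have hcardA : ∀ t : Finset V, ↑t ⊆ A → t.card ≤ k := by
    intro t ht
    obtain ⟨n, hn⟩ := (hUinf _ (hsubA t ht)).nonempty
    exact le_trans (Finset.card_le_card fun u hu => hn u hu) (le_of_eq (hSn n).1)
  have hAfin : A.Finite := by
    by_contra hAinf
    rw [← Set.not_infinite, not_not] at hAinf
    obtain ⟨t, htA, htcard⟩ := hAinf.exists_subset_card_eq (k + 1)
    have := hcardA t htA
    omega
  set Af : Finset V := hAfin.toFinset with hAf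
  have hAfcoe : (Af : Set V) = A := hAfin.coe_toFinset
  -- pigeonhole on neighbors of v
  haveI : Finite ↥(G.neighborSet v) := (hlf v).to_subtype
  have hleft : ∀ n, ∃ w : ↥(G.neighborSet v), (w : V) ∈ (e (op (Sn n))).supp := by
    intro n
    obtain ⟨w, hadj, hw⟩ := tight he he' hmin (hSn n).1 (hSn n).2.1 (hSn n).2.2
    exact ⟨⟨w, hadj⟩, hw⟩
  have hright : ∀ n, ∃ w : ↥(G.neighborSet v), (w : V) ∈ (e' (op (Sn n))).supp := by
    intro n
    obtain ⟨w, hadj, hw⟩ :=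
      tight he' he (fun S h => hmin S (Ne.symm h)) (hSn n).1 (Ne.symm (hSn n).2.1) (hSn n).2.2
    exact ⟨⟨w, hadj⟩, hw⟩
  choose ga hga using hleft
  choose gb hgb using hright
  obtain ⟨a0, ha0⟩ := (Ultrafilter.map ga U).eq_pure_of_finite
  obtain ⟨b0, hb0⟩ := (Ultrafilter.map gb U).eq_pure_of_finite
  have hUa : {n | ga n = a0} ∈ U := by
    have h1 : {a0} ∈ Ultrafilter.map ga U := by rw [ha0]; simp
    rw [Ultrafilter.mem_map] at h1
    exact h1
  have hUb : {n | gb n = b0} ∈ U := by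
    have h1 : {b0} ∈ Ultrafilter.map gb U := by rw [hb0]; simp
    rw [Ultrafilter.mem_map] at h1
    exact h1
  -- A ⊆ Sn n for U-many n
  have hAsub : {n | ∀ u ∈ Af, u ∈ Sn n} ∈ U := hsubA Af (by rw [hAfcoe])
  have ha0Af : (a0 : V) ∈ (e (op Af)).supp := by
    obtain ⟨n, hn1, hn2⟩ := (hUinf _ (Filter.inter_mem hAsub hUa)).nonempty
    have := hga n
    rw [hn2] at this
    exact supp_mono he (fun u hu => hn1 u hu) this
  have hb0Af : (b0 : V) ∈ (e' (op Af)).supp := by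
    obtain ⟨n, hn1, hn2⟩ := (hUinf _ (Filter.inter_mem hAsub hUb)).nonempty
    have := hgb n
    rw [hn2] at this
    exact supp_mono he' (fun u hu => hn1 u hu) this
  by_cases hsepA : e (op Af) ≠ e' (op Af)
  · -- Af is a separator of size ≤ k, so = k, so Sn is eventually constant: contradiction
    have h1 := hmin Af hsepA
    have h2 := hcardA Af (by rw [hAfcoe])
    have h3 : Af.card = k := le_antisymm h2 h1
    obtain ⟨n, hn⟩ := (hUinf _ hAsub).nonempty
    obtain ⟨m, hm⟩ := ((hUinf _ hAsub).diff (Set.finite_singleton n)).nonempty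
    have hmn : m ≠ n := by simpa using hm.2
    have hSnn : Sn n = Af :=
      (Finset.eq_of_subset_of_card_le (fun u hu => hn u hu) (by rw [h3, (hSn n).1])).symm
    have hSmm : Sn m = Af :=
      (Finset.eq_of_subset_of_card_le (fun u hu => hm.1 u hu) (by rw [h3, (hSn m).1])).symm
    exact hmn (hSninj (hSmm.trans hSnn.symm))
  · push_neg at hsepA
    have hb0Af' : (b0 : V) ∈ (e (op Af)).supp := by rw [hsepA]; exact hb0Af
    obtain ⟨p, hp⟩ := exists_walk_of_mem_supp ha0Af hb0Af'
    -- U-many n with  Sn n ∩ p.support ⊆ A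
    have hW : {n | ∀ x ∈ p.support, x ∈ Sn n → x ∈ A} ∈ U := by
      have hsup : {n | ∀ x ∈ p.support, x ∈ Sn n → x ∈ A} ⊇
          ⋂ x ∈ p.support.toFinset, {n | x ∈ Sn n → x ∈ A} := by
        intro n hn
        simp only [Set.mem_iInter] at hn
        intro x hx hxS
        exact hn x (List.mem_toFinset.mpr hx) hxS
      refine Filter.mem_of_superset ((Filter.biInter_mem p.support.toFinset.finite_toSet).mpr ?_) hsup
      intro x hx
      by_cases hxA : x ∈ A
      · have : {n | x ∈ Sn n → x ∈ A} = Set.univ := by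
          ext n; simp [hxA]
        rw [this]; exact Filter.univ_mem
      · have hcompl : {n | x ∈ Sn n}ᶜ ∈ U := Ultrafilter.compl_mem_iff_notMem.mpr hxA
        refine Filter.mem_of_superset hcompl ?_
        intro n hn hxS
        exact absurd hxS hn
    obtain ⟨n, hn1, hn2, hn3⟩ :=
      (hUinf _ (Filter.inter_mem hW (Filter.inter_mem hUa hUb))).nonempty
    have hpn : ∀ x ∈ p.support, x ∉ Sn n := by
      intro x hx hxS
      have hxA : x ∈ A := hn1 x hx hxS
      have : x ∉ Af := hp x hx
      rw [hAf, Set.Finite.mem_toFinset] at this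
      exact this hxA
    have ha0n : (a0 : V) ∈ (e (op (Sn n))).supp := by
      have := hga n; rwa [hn2] at this
    have hb0n : (b0 : V) ∈ (e' (op (Sn n))).supp := by
      have := hgb n; rwa [hn3] at this
    have hb0n' : (b0 : V) ∈ (e (op (Sn n))).supp := mem_supp_of_walk ha0n p hpn
    exact supp_disjoint (Ne.symm (hSn n).2.1) hb0n hb0n'

end Stmt15


/-- in an infinite, connected, locally finite graph with exactly two ends
whose automorphism group has finitely many vertex orbits, every vertex `v` lying in a
minimum separator separating the two ends admits a unique leftmost minimum separator
`S_v`: a minimum separator containing `v` whose left side is contained in the left side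
of every minimum separator containing `v`. -/
theorem stmt_15 {V : Type*} [Infinite V] [DecidableEq V] (G : SimpleGraph V)
    (hconn : G.Connected)
    (hlf : ∀ v : V, (G.neighborSet v).Finite)
    (horb : {O : Set V | ∃ v : V, O = {w | ∃ σ ∈ autGroup G, σ v = w}}.Finite)
    (hends : Nat.card G.end = 2)
    -- the two (distinct) ends, the first one being the `left` end
    (e e' : ∀ K : (Finset V)ᵒᵖ, G.componentComplFunctor.obj K)
    (he : e ∈ G.end) (he' : e' ∈ G.end) (hee : e ≠ e')
    -- k is the connectivity between the two ends: the minimum size of a separator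
    -- separating them
    (k : ℕ)
    (hex : ∃ S : Finset V, S.card = k ∧ e (op S) ≠ e' (op S))
    (hmin : ∀ S : Finset V, e (op S) ≠ e' (op S) → k ≤ S.card) :
    ∀ v : V, (∃ S : Finset V, S.card = k ∧ e (op S) ≠ e' (op S) ∧ v ∈ S) →
      ∃! Sv : Finset V, Sv.card = k ∧ e (op Sv) ≠ e' (op Sv) ∧ v ∈ Sv ∧
        ∀ S : Finset V, S.card = k → e (op S) ≠ e' (op S) → v ∈ S →
          (e (op Sv)).supp ⊆ (e (op S)).supp := by
  intro v hv
  classical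
  set F : Set (Finset V) := {S : Finset V | S.card = k ∧ e (op S) ≠ e' (op S) ∧ v ∈ S} with hF
  have hFfin : F.Finite := Stmt15.finite_seps hlf he he' hmin v
  have hFne : F.Nonempty := hv
  obtain ⟨Sv, hSvF, hSvmin⟩ :=
    Set.Finite.exists_minimalFor (fun S => (e (op S)).supp) F hFfin hFne
  obtain ⟨hSvc, hSvs, hSvv⟩ := hSvF
  have hmain : ∀ S : Finset V, S.card = k → e (op S) ≠ e' (op S) → v ∈ S →
      (e (op Sv)).supp ⊆ (e (op S)).supp := by
    intro S hc hs hvS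
    obtain ⟨T, hT1, hT2, hT3, hT4⟩ := Stmt15.uncross he he' hmin hSvc hSvs hc hs hSvv hvS
    have hTF : T ∈ F := ⟨hT1, hT2, hT3⟩
    have heqT : (e (op Sv)).supp = (e (op T)).supp :=
      le_antisymm (hSvmin hTF (hT4.trans Set.inter_subset_left)) (hT4.trans Set.inter_subset_left)
    rw [heqT]
    exact hT4.trans Set.inter_subset_right
  refine ⟨Sv, ⟨hSvc, hSvs, hSvv, hmain⟩, ?_⟩
  rintro S' ⟨hc', hs', hv', hmin'⟩
  have h1 : (e (op S')).supp ⊆ (e (op Sv)).supp := hmin' Sv hSvc hSvs hSvv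
  have h2 : (e (op Sv)).supp ⊆ (e (op S')).supp := hmain S' hc' hs' hv'
  have hsupp : (e (op S')).supp = (e (op Sv)).supp := le_antisymm h1 h2
  apply Finset.ext
  intro u
  constructor
  · intro hu
    obtain ⟨w, hadj, hw⟩ := Stmt15.tight he he' hmin hc' hs' hu
    have hw' : w ∈ (e (op Sv)).supp := hsupp ▸ hw
    have hu1 : u ∉ (e (op S')).supp := fun h => Stmt15.not_mem_finset_of_mem_supp h hu
    have hu2 : u ∉ (e (op Sv)).supp := by rwa [hsupp] at hu1
    by_contra hnot
    exact hu2 (Stmt15.mem_supp_of_adj' hw' hadj.symm hnot)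
  · intro hu
    obtain ⟨w, hadj, hw⟩ := Stmt15.tight he he' hmin hSvc hSvs hu
    have hw' : w ∈ (e (op S')).supp := by rwa [hsupp]
    have hu1 : u ∉ (e (op Sv)).supp := fun h => Stmt15.not_mem_finset_of_mem_supp h hu
    have hu2 : u ∉ (e (op S')).supp := by rwa [hsupp]
    by_contra hnot
    exact hu2 (Stmt15.mem_supp_of_adj' hw' hadj.symm hnot)
end

section
/- Let G be a finite connected graph, F ⊆ V(G), and let Z be a connected component of G − F with neighborhood N(Z) ⊆ F. Suppose Δ ≤ Aut(G) fixes Z setwise and fixes N(Z) pointwise, Δ has no fixed points in Z, and there is δ ∈ Δ whose restriction to Z has all orbits of length greater than h. If there exists a tree T in G[Z ∪ N(Z)] whose leaf set is exactly N(Z), which contains at most one vertex from each orbit of Δ on Z, and |N(Z)| ≥ h+1, then G contains K_{h+1,h+1}, and hence K_{h+1}, as a minor. -/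
open SimpleGraph

/-- `G` has a complete minor on `k` branch sets. -/
def HasCompleteMinor {V : Type*} (G : SimpleGraph V) (k : ℕ) : Prop :=
  ∃ B : Fin k → Set V,
    (∀ i, (B i).Nonempty) ∧
    (∀ i, (G.induce (B i)).Connected) ∧
    (∀ i j, i ≠ j → Disjoint (B i) (B j)) ∧
    (∀ i j, i ≠ j → ∃ a ∈ B i, ∃ b ∈ B j, G.Adj a b)

/-- `G` has a complete bipartite minor `K_{k,k}`. -/
def HasCompleteBipartiteMinor {V : Type*} (G : SimpleGraph V) (k : ℕ) : Prop :=
  ∃ B : Fin k ⊕ Fin k → Set V,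
    (∀ i, (B i).Nonempty) ∧
    (∀ i, (G.induce (B i)).Connected) ∧
    (∀ i j, i ≠ j → Disjoint (B i) (B j)) ∧
    (∀ i j, ∃ a ∈ B (Sum.inl i), ∃ b ∈ B (Sum.inr j), G.Adj a b)

/-- The (open) neighborhood of a set of vertices. -/
def setNbhd {V : Type*} (G : SimpleGraph V) (C : Set V) : Set V :=
  {v | v ∉ C ∧ ∃ w ∈ C, G.Adj v w}

section Helpers
variable {V : Type*} {G : SimpleGraph V}


def inducedHomVal (G : SimpleGraph V) (s : Set V) : G.induce s →g G :=
  ⟨Subtype.val, fun {a b} hab => hab⟩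

lemma reach_in_induce {s : Set V} : ∀ {u v : V} (p : G.Walk u v)
    (_ : ∀ x ∈ p.support, x ∈ s) (hu : u ∈ s) (hv : v ∈ s),
    (G.induce s).Reachable ⟨u, hu⟩ ⟨v, hv⟩ := by
  intro u v p
  induction p with
  | nil => exact fun _ hu hv => Reachable.refl _
  | @cons x y z h q ih =>
    intro hs hu hv
    have hy : y ∈ s := hs y (by simp)
    refine Reachable.trans ?_ (ih (fun x hx => hs x (by simp [hx])) hy hv)
    exact Adj.reachable (by simpa using h)

lemma reach_induce_mono {s t : Set V} (hst : s ⊆ t) {u v : V} (hu : u ∈ s) (hv : v ∈ s)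
    (h : (G.induce s).Reachable ⟨u, hu⟩ ⟨v, hv⟩) :
    (G.induce t).Reachable ⟨u, hst hu⟩ ⟨v, hst hv⟩ := by
  obtain ⟨p⟩ := h
  refine reach_in_induce (p.map (inducedHomVal G s)) ?_ (hst hu) (hst hv)
  intro x hx
  rw [Walk.support_map, List.mem_map] at hx
  obtain ⟨y, _, rfl⟩ := hx
  exact hst y.2

lemma connected_induce_singleton (x : V) : (G.induce {x}).Connected := by
  rw [connected_iff]
  refine ⟨fun a b => ?_, ⟨⟨x, rfl⟩⟩⟩
  have : a = b := Subtype.ext (by rw [a.2, b.2])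
  exact this ▸ Reachable.refl _

lemma connected_induce_union {s t : Set V} (hs : (G.induce s).Connected)
    (ht : (G.induce t).Connected) {a b : V} (ha : a ∈ s) (hb : b ∈ t) (hab : G.Adj a b) :
    (G.induce (s ∪ t)).Connected := by
  have key : ∀ x (hx : x ∈ s ∪ t), (G.induce (s ∪ t)).Reachable ⟨x, hx⟩ ⟨a, Or.inl ha⟩ := by
    intro x hx
    rcases hx with hx | hx
    · exact reach_induce_mono Set.subset_union_left hx ha (hs ⟨x, hx⟩ ⟨a, ha⟩)
    · refine Reachable.trans ?_ (Adj.reachable (u := (⟨b, Or.inr hb⟩ : ↥(s ∪ t)))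
        (by simpa using hab.symm))
      exact reach_induce_mono Set.subset_union_right hx hb (ht ⟨x, hx⟩ ⟨b, hb⟩)
  rw [connected_iff]
  exact ⟨fun x y => (key x.val x.2).trans (key y.val y.2).symm, ⟨⟨a, Or.inl ha⟩⟩⟩

lemma bip_to_complete {k : ℕ} (h : HasCompleteBipartiteMinor G k) : HasCompleteMinor G k := by
  obtain ⟨B, hne, hconn, hdisj, hadj⟩ := h
  refine ⟨fun i => B (Sum.inl i) ∪ B (Sum.inr i), fun i => ?_, fun i => ?_,
    fun i j hij => ?_, fun i j hij => ?_⟩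
  · exact (hne (Sum.inl i)).mono Set.subset_union_left
  · obtain ⟨a, ha, b, hb, hab⟩ := hadj i i
    exact connected_induce_union (hconn _) (hconn _) ha hb hab
  · have h1 := hdisj (Sum.inl i) (Sum.inl j) (by simpa using hij)
    have h2 := hdisj (Sum.inl i) (Sum.inr j) (by simp)
    have h3 := hdisj (Sum.inr i) (Sum.inl j) (by simp)
    have h4 := hdisj (Sum.inr i) (Sum.inr j) (by simpa using hij)
    exact Set.disjoint_union_left.2 ⟨Set.disjoint_union_right.2 ⟨h1, h2⟩,
      Set.disjoint_union_right.2 ⟨h3, h4⟩⟩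
  · obtain ⟨a, ha, b, hb, hab⟩ := hadj i j
    exact ⟨a, Or.inl ha, b, Or.inr hb, hab⟩

lemma connected_induce_of_subgraph_connected (H : G.Subgraph) (hH : H.Connected) :
    (G.induce H.verts).Connected := by
  rw [connected_iff]
  refine ⟨fun x y => ?_, hH.nonempty.coe_sort⟩
  obtain ⟨p⟩ := hH ⟨x.val, x.2⟩ ⟨y.val, y.2⟩
  refine reach_in_induce (p.map (Subgraph.hom H)) ?_ x.2 y.2
  intro z hz
  rw [Walk.support_map, List.mem_map] at hz
  obtain ⟨w, _, rfl⟩ := hz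
  exact w.2


lemma connected_induce_image {σ : Equiv.Perm V}
    (hσ : ∀ a b, G.Adj (σ a) (σ b) ↔ G.Adj a b) {s : Set V}
    (hs : (G.induce s).Connected) : (G.induce (σ '' s)).Connected := by
  let φ : G.induce s →g G.induce (σ '' s) :=
    ⟨fun a => ⟨σ a.val, ⟨a.val, a.2, rfl⟩⟩, fun {a b} hab => (hσ _ _).2 hab⟩
  rw [connected_iff]
  constructor
  · intro x y
    obtain ⟨px, hpx, hex⟩ := x.2
    obtain ⟨py, hpy, hey⟩ := y.2
    have := Reachable.map φ (hs ⟨px, hpx⟩ ⟨py, hpy⟩)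
    have ex : φ ⟨px, hpx⟩ = x := Subtype.ext hex
    have ey : φ ⟨py, hpy⟩ = y := Subtype.ext hey
    rwa [ex, ey] at this
  · obtain ⟨⟨x, hx⟩⟩ := hs.nonempty
    exact ⟨⟨σ x, ⟨x, hx, rfl⟩⟩⟩

lemma tree_interior_reach [Finite V] {T : G.Subgraph} {Z : Set V}
    (hbig : ∀ v ∈ T.verts, 1 < (T.neighborSet v).ncard → v ∈ Z) :
    ∀ {u v : T.verts} (p : T.coe.Walk u v), p.IsPath →
      ∀ (hu : u.val ∈ Z) (hv : v.val ∈ Z),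
      (G.induce (T.verts ∩ Z)).Reachable ⟨u.val, u.2, hu⟩ ⟨v.val, v.2, hv⟩ := by
  intro u v p
  induction p with
  | nil => exact fun _ hu hv => Reachable.refl _
  | @cons x y z h q ih =>
    intro hp hu hv
    have hGadj : ∀ (a b : T.verts), T.coe.Adj a b → ∀ (ha : a.val ∈ T.verts ∩ Z)
        (hb : b.val ∈ T.verts ∩ Z),
        (G.induce (T.verts ∩ Z)).Adj ⟨a.val, ha⟩ ⟨b.val, hb⟩ := by
      intro a b hab _ _
      exact T.adj_sub hab
    cases q with
    | nil => exact Adj.reachable (hGadj x y h ⟨x.2, hu⟩ ⟨y.2, hv⟩)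
    | @cons _ y2 _ h2 q2 =>
      have hxy2 : x ≠ y2 := by
        intro e
        have hnd := hp.support_nodup
        rw [Walk.support_cons, List.nodup_cons] at hnd
        refine hnd.1 ?_
        rw [Walk.support_cons]
        exact List.mem_cons_of_mem _ (e ▸ q2.start_mem_support)
      have hy : y.val ∈ Z := by
        apply hbig y.val y.2
        have hsub : ({x.val, y2.val} : Set V) ⊆ T.neighborSet y.val := by
          intro w hw
          rcases hw with rfl | rfl
          · exact h.symm
          · exact h2
        have h2' : ({x.val, y2.val} : Set V).ncard = 2 :=
          Set.ncard_pair (fun e => hxy2 (Subtype.ext e))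
        calc 1 < 2 := one_lt_two
          _ = _ := h2'.symm
          _ ≤ _ := Set.ncard_le_ncard hsub (Set.toFinite _)
      exact (Adj.reachable (hGadj x y h ⟨x.2, hu⟩ ⟨y.2, hy⟩)).trans
        (ih hp.of_cons hy hv)


lemma leaf_nbr [DecidableEq V] {T : G.Subgraph} {Z N : Set V}
    (hTverts : T.verts ⊆ Z ∪ N) (hZN : ∀ v ∈ N, v ∉ Z)
    (hleaf : ∀ v ∈ N, v ∈ T.verts ∧ (T.neighborSet v).ncard = 1)
    (hconn : T.coe.Connected)
    {x0 : V} (hx0 : x0 ∈ T.verts ∩ Z) {ℓ : V} (hℓ : ℓ ∈ N) :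
    ∃ w ∈ T.verts ∩ Z, T.Adj ℓ w := by
  obtain ⟨hℓT, hnc⟩ := hleaf ℓ hℓ
  obtain ⟨w, hw⟩ := Set.ncard_eq_one.1 hnc
  have hadj : T.Adj ℓ w := by rw [← T.mem_neighborSet, hw]; rfl
  have hwT : w ∈ T.verts := hadj.snd_mem
  rcases hTverts hwT with hwZ | hwN
  · exact ⟨w, ⟨hwT, hwZ⟩, hadj⟩
  · exfalso
    obtain ⟨-, hnc2⟩ := hleaf w hwN
    obtain ⟨u, hu⟩ := Set.ncard_eq_one.1 hnc2
    have hueq : u = ℓ := by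
      have : ℓ ∈ T.neighborSet w := hadj.symm
      rw [hu] at this; exact this.symm
    rw [hueq] at hu
    -- walk from ℓ to x0
    have hne : (⟨ℓ, hℓT⟩ : T.verts) ≠ ⟨x0, hx0.1⟩ := by
      intro e
      exact hZN ℓ hℓ (by rw [show ℓ = x0 from congrArg Subtype.val e]; exact hx0.2)
    obtain ⟨p0⟩ := hconn ⟨ℓ, hℓT⟩ ⟨x0, hx0.1⟩
    let p := p0.toPath
    have hp : p.1.IsPath := p.2
    obtain ⟨pw⟩ := p
    cases pw with
    | nil => exact hne rfl
    | @cons _ y _ h1 q =>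
      have hyw : (y : V) = w := by
        have : (y : V) ∈ T.neighborSet ℓ := h1
        rw [hw] at this; exact this
      cases q with
      | nil =>
        exact hZN w hwN (hyw ▸ hx0.2)
      | @cons _ y2 _ h2 q2 =>
        have hy2 : (y2 : V) = ℓ := by
          have : (y2 : V) ∈ T.neighborSet w := by rw [← hyw]; exact h2
          rw [hu] at this; exact this
        have hnd := hp.support_nodup
        rw [Walk.support_cons, List.nodup_cons] at hnd
        refine hnd.1 ?_
        rw [Walk.support_cons]
        refine List.mem_cons_of_mem _ ?_
        have : y2 = (⟨ℓ, hℓT⟩ : T.verts) := Subtype.ext hy2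
        exact this ▸ q2.start_mem_support

lemma tree_two_verts [DecidableEq V] {T : G.Subgraph} (hconn : T.coe.Connected)
    {a b : V} (haT : a ∈ T.verts)
    (hab : T.neighborSet a = {b}) (hba : T.neighborSet b = {a}) :
    ∀ c ∈ T.verts, c = a ∨ c = b := by
  intro c hcT
  obtain ⟨p0⟩ := hconn ⟨a, haT⟩ ⟨c, hcT⟩
  let p := p0.toPath
  have hp : p.1.IsPath := p.2
  obtain ⟨pw⟩ := p
  cases pw with
  | nil => exact Or.inl rfl
  | @cons _ y _ h1 q =>
    have hyb : (y : V) = b := by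
      have : (y : V) ∈ T.neighborSet a := h1
      rw [hab] at this; exact this
    cases q with
    | nil => exact Or.inr hyb
    | @cons _ y2 _ h2 q2 =>
      exfalso
      have hy2 : (y2 : V) = a := by
        have : (y2 : V) ∈ T.neighborSet b := by rw [← hyb]; exact h2
        rw [hba] at this; exact this
      have hnd := hp.support_nodup
      rw [Walk.support_cons, List.nodup_cons] at hnd
      refine hnd.1 ?_
      rw [Walk.support_cons]
      refine List.mem_cons_of_mem _ ?_
      have : y2 = (⟨a, haT⟩ : T.verts) := Subtype.ext hy2
      exact this ▸ q2.start_mem_support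

end Helpers

/-- let `Z` be a component of `G − F` and `Δ ≤ Aut(G)` fix `Z` setwise,
`N(Z)` pointwise and have no fixed point in `Z`, with some `δ ∈ Δ` all of whose orbits
on `Z` are longer than `h`.  If there is a tree in `G[Z ∪ N(Z)]` whose leaves are
exactly `N(Z)`, meeting each `Δ`-orbit on `Z` at most once, and `|N(Z)| ≥ h+1`, then
`G` has a `K_{h+1,h+1}` minor and hence a `K_{h+1}` minor. -/
theorem stmt_16 {V : Type*} [Fintype V] [DecidableEq V] (G : SimpleGraph V)
    (hconn : G.Connected) (h : ℕ)
    (F Z : Set V) (hZF : Disjoint Z F)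
    (hZconn : (G.induce Z).Connected)
    (hZcomp : ∀ a ∈ Z, ∀ b : V, G.Adj a b → b ∈ Z ∪ F)
    (hNZ : setNbhd G Z ⊆ F)
    (Δ : Subgroup (Equiv.Perm V)) (hΔ : Δ ≤ autGroup G)
    (hZset : ∀ σ ∈ Δ, ∀ v ∈ Z, σ v ∈ Z)
    (hNfix : ∀ σ ∈ Δ, ∀ v ∈ setNbhd G Z, σ v = v)
    (hnofix : ∀ v ∈ Z, ∃ σ ∈ Δ, σ v ≠ v)
    (δ : Equiv.Perm V) (hδ : δ ∈ Δ)
    (hδorb : ∀ v ∈ Z, ∀ n : ℕ, 0 < n → n ≤ h → (δ ^ n) v ≠ v)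
    (T : G.Subgraph)
    (hTverts : T.verts ⊆ Z ∪ setNbhd G Z)
    (hTtree : T.coe.IsTree)
    (hTleaves : {v : V | v ∈ T.verts ∧ (T.neighborSet v).ncard = 1} = setNbhd G Z)
    (hTorb : ∀ v ∈ T.verts ∩ Z, ∀ w ∈ T.verts ∩ Z,
      (∃ σ ∈ Δ, σ v = w) → v = w)
    (hNbig : h + 1 ≤ (setNbhd G Z).ncard) :
    HasCompleteBipartiteMinor G (h + 1) ∧ HasCompleteMinor G (h + 1) := by
  -- It suffices to establish the bipartite minor
  suffices hbip : HasCompleteBipartiteMinor G (h + 1) from ⟨hbip, bip_to_complete hbip⟩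
  have hZN : ∀ v ∈ setNbhd G Z, v ∉ Z := fun v hv => hv.1
  have hleaf : ∀ v ∈ setNbhd G Z, v ∈ T.verts ∧ (T.neighborSet v).ncard = 1 := by
    intro v hv; rw [← hTleaves] at hv; exact hv
  have hbig : ∀ v ∈ T.verts, 1 < (T.neighborSet v).ncard → v ∈ Z := by
    intro v hvT hlt
    rcases hTverts hvT with hZ | hNv
    · exact hZ
    · have := (hleaf v hNv).2; omega
  have hTconn := hTtree.isConnected
  by_cases hI : (T.verts ∩ Z).Nonempty
  · -- main case : the interior of the tree is nonempty
    set I : Set V := T.verts ∩ Z with hIdef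
    -- pick h+1 distinct leaves
    obtain ⟨S, hSsub, hScard⟩ := Set.exists_subset_card_eq hNbig
    have hSfin : S.Finite := Set.toFinite _
    have hcard : hSfin.toFinset.card = h + 1 := by
      rw [← Set.ncard_eq_toFinset_card _ hSfin]; exact hScard
    let e := hSfin.toFinset.equivFin
    let ℓ : Fin (h + 1) → V := fun i => (e.symm (Fin.cast hcard.symm i)).val
    have hℓmem : ∀ i, ℓ i ∈ setNbhd G Z := fun i =>
      hSsub (hSfin.mem_toFinset.1 (e.symm (Fin.cast hcard.symm _)).2)
    have hℓinj : Function.Injective ℓ := by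
      intro i j hij
      have := e.symm.injective (Subtype.ext hij)
      simpa [Fin.ext_iff] using congrArg Fin.val this
    -- connectivity of the interior
    have hIconn : (G.induce I).Connected := by
      rw [connected_iff]
      refine ⟨fun x y => ?_, ⟨⟨hI.choose, hI.choose_spec⟩⟩⟩
      obtain ⟨p0⟩ := hTconn ⟨x.val, x.2.1⟩ ⟨y.val, y.2.1⟩
      exact tree_interior_reach hbig p0.toPath.1 p0.toPath.2 x.2.2 y.2.2
    -- basic facts about powers of δ
    have hpowΔ : ∀ n : ℕ, δ ^ n ∈ Δ := fun n => Subgroup.pow_mem Δ hδ n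
    have hpowAut : ∀ (n : ℕ) (a b : V), G.Adj ((δ ^ n) a) ((δ ^ n) b) ↔ G.Adj a b :=
      fun n => hΔ (hpowΔ n)
    have hpowZ : ∀ (n : ℕ), ∀ v ∈ Z, (δ ^ n) v ∈ Z := fun n => hZset _ (hpowΔ n)
    have hIZ : ∀ (n : ℕ) (v : V), v ∈ (δ ^ n) '' I → v ∈ Z := by
      rintro n v ⟨x, hx, rfl⟩; exact hpowZ n x hx.2
    -- disjointness of the images of the interior
    have hdisj_core : ∀ i j : ℕ, i < j → j ≤ h →
        Disjoint ((δ ^ i) '' I) ((δ ^ j) '' I) := by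
      intro i j hij hjh
      rw [Set.disjoint_left]
      rintro v ⟨x, hx, rfl⟩ ⟨y, hy, hee⟩
      have he2 : (δ ^ (j - i)) y = x := by
        apply (Equiv.injective (δ ^ i))
        rw [← Equiv.Perm.mul_apply, ← pow_add, show i + (j - i) = j from by omega]
        exact hee
      have hxy : y = x := hTorb y hy x hx ⟨δ ^ (j - i), hpowΔ _, he2⟩
      exact hδorb y hy.2 (j - i) (by omega) (by omega) (he2.trans hxy.symm)
    -- each leaf has a neighbour in the interior
    have hW : ∀ j : Fin (h + 1), ∃ w ∈ I, T.Adj (ℓ j) w := fun j =>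
      leaf_nbr hTverts hZN hleaf hTconn hI.some_mem (hℓmem j)
    refine ⟨Sum.elim (fun i : Fin (h + 1) => (δ ^ (i : ℕ)) '' I)
      (fun j : Fin (h + 1) => {ℓ j}), fun i => ?_, fun i => ?_, fun i j hij => ?_, fun i j => ?_⟩
    · rcases i with i | i
      · exact hI.image _
      · exact ⟨ℓ i, rfl⟩
    · rcases i with i | i
      · exact connected_induce_image (hpowAut i) hIconn
      · exact connected_induce_singleton _
    · rcases i with i | i <;> rcases j with j | j
      · have hij' : (i : ℕ) ≠ (j : ℕ) := fun e => hij (by simpa [Fin.ext_iff] using e)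
        rcases lt_or_gt_of_ne hij' with hlt | hgt
        · exact hdisj_core _ _ hlt (by omega)
        · exact (hdisj_core _ _ hgt (by omega)).symm
      · rw [Set.disjoint_left]
        rintro v hv rfl
        exact hZN _ (hℓmem j) (hIZ _ _ hv)
      · rw [Set.disjoint_right]
        rintro v hv rfl
        exact hZN _ (hℓmem i) (hIZ _ _ hv)
      · have : ℓ i ≠ ℓ j := fun e => hij (by rw [hℓinj e])
        simpa [Set.disjoint_singleton_left] using fun e => this e
    · obtain ⟨w, hwI, hwadj⟩ := hW j
      refine ⟨(δ ^ (i : ℕ)) w, ⟨w, hwI, rfl⟩, ℓ j, rfl, ?_⟩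
      have hfix : (δ ^ (i : ℕ)) (ℓ j) = ℓ j := hNfix _ (hpowΔ i) _ (hℓmem j)
      have := (hpowAut i w (ℓ j)).2 (T.adj_sub hwadj.symm)
      rwa [hfix] at this
  · -- degenerate case : the tree has no interior vertices
    have hIe : T.verts ∩ Z = ∅ := Set.not_nonempty_iff_eq_empty.1 hI
    have hNne : (setNbhd G Z).Nonempty := Set.nonempty_of_ncard_ne_zero (by omega)
    obtain ⟨a, haN⟩ := hNne
    obtain ⟨haT, hnca⟩ := hleaf a haN
    obtain ⟨b, hba⟩ := Set.ncard_eq_one.1 hnca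
    have hTab : T.Adj a b := by rw [← T.mem_neighborSet, hba]; rfl
    have hbT : b ∈ T.verts := hTab.snd_mem
    have hbN : b ∈ setNbhd G Z := by
      rcases hTverts hbT with hbZ | hbN
      · exact absurd (Set.mem_inter hbT hbZ) (hIe ▸ Set.notMem_empty b)
      · exact hbN
    have hnbb : T.neighborSet b = {a} := by
      obtain ⟨u, hu⟩ := Set.ncard_eq_one.1 (hleaf b hbN).2
      have : a ∈ T.neighborSet b := hTab.symm
      rw [hu] at this
      rw [hu, this]
    have habne : a ≠ b := fun e => (T.adj_sub hTab).ne e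
    have hNsub : setNbhd G Z ⊆ {a, b} := by
      intro c hc
      rcases tree_two_verts hTconn haT hba hnbb c (hleaf c hc).1 with rfl | rfl
      · exact Or.inl rfl
      · exact Or.inr rfl
    have hN2 : (setNbhd G Z).ncard ≤ 2 := by
      calc (setNbhd G Z).ncard ≤ ({a, b} : Set V).ncard :=
            Set.ncard_le_ncard hNsub (Set.toFinite _)
        _ = 2 := Set.ncard_pair habne
    have hGab : G.Adj a b := T.adj_sub hTab
    have hh : h = 0 ∨ h = 1 := by omega
    rcases hh with rfl | rfl
    · -- h = 0 : a single edge suffices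
      refine ⟨Sum.elim (fun _ => {a}) (fun _ => {b}), fun i => ?_, fun i => ?_,
        fun i j hij => ?_, fun i j => ?_⟩
      · rcases i with i | i <;> exact ⟨_, rfl⟩
      · rcases i with i | i <;> exact connected_induce_singleton _
      · rcases i with i | i <;> rcases j with j | j
        · exact absurd (congrArg Sum.inl (Fin.ext (by omega))) hij
        · simpa [Set.disjoint_singleton_left] using habne
        · simpa [Set.disjoint_singleton_left] using fun e => habne e.symm
        · exact absurd (congrArg Sum.inr (Fin.ext (by omega))) hij
      · exact ⟨a, rfl, b, rfl, hGab⟩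
    · -- h = 1 : K₂,₂ via a path through the component
      obtain ⟨z, hzZ, haz⟩ := haN.2
      obtain ⟨w, hwZ, hbw⟩ := hbN.2
      obtain ⟨za, zb, hzaZ, hzbZ, haza, hbzb, hzne⟩ :
          ∃ za zb, za ∈ Z ∧ zb ∈ Z ∧ G.Adj a za ∧ G.Adj b zb ∧ za ≠ zb := by
        by_cases hzw : z = w
        · subst hzw
          refine ⟨δ z, z, hZset δ hδ z hzZ, hzZ, ?_, hbw, hδorb z hzZ 1 one_pos le_rfl ∘ ?_⟩
          · have := (hΔ hδ a z).2 haz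
            rwa [hNfix δ hδ a haN] at this
          · intro e; rw [pow_one]; exact e
        · exact ⟨z, w, hzZ, hwZ, haz, hbw, hzw⟩
      obtain ⟨p0⟩ := hZconn ⟨za, hzaZ⟩ ⟨zb, hzbZ⟩
      let p := p0.toPath
      have hp : p.1.IsPath := p.2
      obtain ⟨pw⟩ := p
      cases pw with
      | nil => exact absurd rfl hzne
      | @cons _ y _ h1 q =>
        have hyadj : G.Adj za y.val := h1
        let qG := q.map (inducedHomVal G Z)
        have hyS : y.val ∈ qG.toSubgraph.verts := qG.start_mem_verts_toSubgraph
        have hzbS : zb ∈ qG.toSubgraph.verts := qG.end_mem_verts_toSubgraph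
        have hSsubZ : qG.toSubgraph.verts ⊆ Z := by
          intro x hx
          rw [Walk.mem_verts_toSubgraph, Walk.support_map, List.mem_map] at hx
          obtain ⟨u, -, rfl⟩ := hx
          exact u.2
        have hzaS : za ∉ qG.toSubgraph.verts := by
          intro hx
          rw [Walk.mem_verts_toSubgraph, Walk.support_map, List.mem_map] at hx
          obtain ⟨u, hu, hue⟩ := hx
          have heq : u = (⟨za, hzaZ⟩ : ↥Z) := Subtype.ext hue
          subst heq
          have hnd := hp.support_nodup
          rw [Walk.support_cons, List.nodup_cons] at hnd
          exact hnd.1 hu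
        have hSconn : (G.induce qG.toSubgraph.verts).Connected :=
          connected_induce_of_subgraph_connected _ qG.toSubgraph_connected
        have haZ' : a ∉ Z := hZN a haN
        have hbZ' : b ∉ Z := hZN b hbN
        have dA0S : Disjoint ({a} : Set V) qG.toSubgraph.verts :=
          Set.disjoint_singleton_left.2 (fun hv => haZ' (hSsubZ hv))
        have dB0S : Disjoint ({b} : Set V) qG.toSubgraph.verts :=
          Set.disjoint_singleton_left.2 (fun hv => hbZ' (hSsubZ hv))
        have dA0B0 : Disjoint ({a} : Set V) {b} := Set.disjoint_singleton_left.2 (by simpa)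
        have dA0B1 : Disjoint ({a} : Set V) {za} :=
          Set.disjoint_singleton_left.2 (fun e => haZ' (by rw [Set.mem_singleton_iff] at e; rw [e]; exact hzaZ))
        have dB0B1 : Disjoint ({b} : Set V) {za} :=
          Set.disjoint_singleton_left.2 (fun e => hbZ' (by rw [Set.mem_singleton_iff] at e; rw [e]; exact hzaZ))
        have dSB1 : Disjoint qG.toSubgraph.verts ({za} : Set V) :=
          Set.disjoint_singleton_right.2 hzaS
        refine ⟨Sum.elim ![{a}, qG.toSubgraph.verts] ![{b}, {za}], fun i => ?_, fun i => ?_,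
          fun i j hij => ?_, fun i j => ?_⟩
        · rcases i with i | i <;> fin_cases i
          · exact ⟨a, rfl⟩
          · exact ⟨y.val, hyS⟩
          · exact ⟨b, rfl⟩
          · exact ⟨za, rfl⟩
        · rcases i with i | i <;> fin_cases i
          · exact connected_induce_singleton _
          · exact hSconn
          · exact connected_induce_singleton _
          · exact connected_induce_singleton _
        · rcases i with i | i <;> rcases j with j | j <;> fin_cases i <;> fin_cases j <;>
            simp only [Sum.elim_inl, Sum.elim_inr, Matrix.cons_val_zero, Matrix.cons_val_one,
              Matrix.head_cons] <;>
            first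
              | exact absurd rfl hij
              | exact dA0S | exact dA0S.symm
              | exact dB0S | exact dB0S.symm
              | exact dA0B0 | exact dA0B0.symm
              | exact dA0B1 | exact dA0B1.symm
              | exact dB0B1 | exact dB0B1.symm
              | exact dSB1 | exact dSB1.symm
        · fin_cases i <;> fin_cases j <;>
            simp only [Sum.elim_inl, Sum.elim_inr, Matrix.cons_val_zero, Matrix.cons_val_one,
              Matrix.head_cons]
          · exact ⟨a, rfl, b, rfl, hGab⟩
          · exact ⟨a, rfl, za, rfl, haza⟩
          · exact ⟨zb, hzbS, b, rfl, hbzb.symm⟩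
          · exact ⟨y.val, hyS, za, rfl, hyadj.symm⟩
end
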